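/- For all positive integers n, the n-th Bernoulli number of the second kind satisfies B_n^* = - sum_{k=1}^{n} (n/k) * s(n-1, k-1) * B_k, where s(n,k) are the (signed) Stirling numbers of the first kind. -/

import Mathlib

open Finset

/-- Stirling numbers of the second kind. -/
def stirling2 : ℕ → ℕ → ℕ
  | 0, 0 => 1
  | 0, _ + 1 => 0
  | _ + 1, 0 => 0
  | n + 1, k + 1 => stirling2 n k + (k + 1) * stirling2 n (k + 1)

/-- Signed Stirling numbers of the first kind. -/
def stirling1 : ℕ → ℕ → ℤ
  | 0, 0 => 1
  | 0, _ + 1 => 0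
  | n + 1, 0 => -(n : ℤ) * stirling1 n 0
  | n + 1, k + 1 => stirling1 n k - (n : ℤ) * stirling1 n (k + 1)

open Polynomial

lemma coeff_descPochhammer (n k : ℕ) :
    (descPochhammer ℝ n).coeff k = (stirling1 n k : ℝ) := by
  induction n generalizing k with
  | zero =>
    cases k with
    | zero => simp [stirling1]
    | succ k => simp [stirling1, coeff_one]
  | succ n ih =>
    have hc : ((n : ℝ[X])) = C (n : ℝ) := by simp
    rw [descPochhammer_succ_right, mul_sub, coeff_sub, hc, coeff_mul_C]
    cases k with
    | zero =>
      rw [mul_coeff_zero, coeff_X_zero, mul_zero, ih]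
      show (0:ℝ) - _ = ((-(n:ℤ) * stirling1 n 0 : ℤ) : ℝ)
      push_cast; ring
    | succ k =>
      rw [coeff_mul_X, ih, ih]
      show _ = ((stirling1 n k - (n:ℤ) * stirling1 n (k+1) : ℤ) : ℝ)
      push_cast; ring

lemma stirling1_eq_zero_of_lt {n k : ℕ} (h : n < k) : stirling1 n k = 0 := by
  have h1 : (descPochhammer ℝ n).coeff k = 0 := by
    apply coeff_eq_zero_of_natDegree_lt
    rwa [descPochhammer_natDegree]
  have := coeff_descPochhammer n k
  rw [h1] at this
  exact_mod_cast this.symm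

lemma stirling1_zero_right {n : ℕ} (h : 0 < n) : stirling1 n 0 = 0 := by
  induction n with
  | zero => omega
  | succ n ih =>
    cases n with
    | zero => simp [stirling1]
    | succ m => rw [stirling1, ih (Nat.succ_pos m), mul_zero]

lemma descPochhammer_comp_X_add_one (n : ℕ) :
    (descPochhammer ℝ (n + 1)).comp (X + 1) =
      descPochhammer ℝ (n + 1) + ((n : ℝ[X]) + 1) * descPochhammer ℝ n := by
  have h := descPochhammer_succ_comp_X_sub_one ℝ n
  have h2 := congrArg (fun p => p.comp (X + 1)) h
  simp only [sub_comp, smul_comp, mul_comp, natCast_comp, one_comp, comp_assoc, X_comp,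
    add_sub_cancel_right, comp_X, smul_eq_mul, add_comp] at h2
  linear_combination (norm := ring_nf) -h2

lemma coeff_comp_X_add_one (p : ℝ[X]) (N m : ℕ) (hN : p.natDegree < N) :
    (p.comp (X + 1)).coeff m = ∑ j ∈ range N, p.coeff j * (j.choose m : ℝ) := by
  rw [comp_eq_sum_left, Polynomial.sum_over_range' _ (by simp) N hN, finset_sum_coeff]
  refine Finset.sum_congr rfl fun j _ => ?_
  rw [coeff_C_mul, coeff_X_add_one_pow]


/-- Bernoulli numbers of the second kind: `∫₀¹ x(x-1)⋯(x-n+1) dx`. -/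
noncomputable def bernoulliStar (n : ℕ) : ℝ :=
  ∫ x in (0:ℝ)..1, (descPochhammer ℝ n).eval x

lemma bernoulliStar_eq_sum (n : ℕ) :
    bernoulliStar n = ∑ j ∈ range (n + 1), (stirling1 n j : ℝ) / (j + 1) := by
  unfold bernoulliStar
  have hdeg : (descPochhammer ℝ n).natDegree = n := descPochhammer_natDegree ℝ n
  have heval : ∀ x : ℝ, (descPochhammer ℝ n).eval x
      = ∑ j ∈ range (n + 1), (stirling1 n j : ℝ) * x ^ j := by
    intro x
    rw [eval_eq_sum_range' (by omega : (descPochhammer ℝ n).natDegree < n + 1)]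
    exact Finset.sum_congr rfl fun j _ => by rw [coeff_descPochhammer]
  simp_rw [heval]
  rw [intervalIntegral.integral_finset_sum (fun j _ =>
    show IntervalIntegrable (fun x : ℝ => (stirling1 n j : ℝ) * x ^ j) MeasureTheory.volume 0 1
      from (continuous_const.mul (continuous_pow j)).intervalIntegrable 0 1)]
  refine Finset.sum_congr rfl fun j _ => ?_
  rw [intervalIntegral.integral_const_mul, integral_pow]
  norm_num
  ring

lemma key_identity (m i : ℕ) :
    ((m : ℝ) + 1) * (stirling1 m i : ℝ) =
      (∑ j ∈ range (m + 2), (stirling1 (m + 1) j : ℝ) * ((j.choose i : ℕ) : ℝ))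
        - (stirling1 (m + 1) i : ℝ) := by
  have h := congrArg (fun p : ℝ[X] => p.coeff i) (descPochhammer_comp_X_add_one m)
  simp only [coeff_add] at h
  have hdeg : (descPochhammer ℝ (m + 1)).natDegree < m + 2 := by
    rw [descPochhammer_natDegree]; omega
  rw [coeff_comp_X_add_one _ (m + 2) i hdeg] at h
  have hc : ((m : ℝ[X]) + 1) = C ((m : ℝ) + 1) := by simp
  rw [hc, coeff_C_mul] at h
  simp only [coeff_descPochhammer] at h
  linarith [h]

lemma sum_bernoulli_real (N : ℕ) :
    ∑ k ∈ range N, ((N.choose k : ℕ) : ℝ) * (bernoulli k : ℝ)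
      = if N = 1 then 1 else 0 := by
  have h := _root_.sum_bernoulli N
  have := congrArg (fun q : ℚ => (q : ℝ)) h
  push_cast at this
  rw [this]
  split <;> norm_num

lemma inner_bernoulli_sum (n j : ℕ) (hj : j ≤ n) :
    ∑ i ∈ range (n + 1), (((j + 1).choose (i + 1) : ℕ) : ℝ) * (bernoulli (i + 1) : ℝ)
      = (if j = 0 then (1:ℝ) else 0) + (bernoulli (j + 1) : ℝ) - 1 := by
  set f : ℕ → ℝ := fun k => (((j + 1).choose k : ℕ) : ℝ) * (bernoulli k : ℝ) with hf
  have h1 : ∑ i ∈ range (n + 2), f i = (∑ i ∈ range (n + 1), f (i + 1)) + f 0 :=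
    Finset.sum_range_succ' f (n + 1)
  have h2 : ∑ i ∈ range (n + 2), f i = ∑ i ∈ range (j + 2), f i := by
    symm
    apply Finset.sum_subset (Finset.range_subset_range.mpr (by omega))
    intro k _ hk
    simp only [Finset.mem_range, not_lt] at hk
    have : (j + 1).choose k = 0 := Nat.choose_eq_zero_of_lt (by omega)
    simp [hf, this]
  have h3 : ∑ i ∈ range (j + 2), f i = (∑ i ∈ range (j + 1), f i) + f (j + 1) :=
    Finset.sum_range_succ f (j + 1)
  have h4 : ∑ i ∈ range (j + 1), f i = if j = 0 then (1:ℝ) else 0 := by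
    rw [hf]
    rw [sum_bernoulli_real (j + 1)]
    simp [Nat.succ_inj]
  have h5 : f (j + 1) = (bernoulli (j + 1) : ℝ) := by simp [hf]
  have h6 : f 0 = 1 := by simp [hf]
  have := h1
  rw [h2, h3, h4, h5, h6] at this
  linarith [this]


theorem stmt2 (n : ℕ) (hn : 0 < n) :
    bernoulliStar n =
      - ∑ k ∈ Finset.Icc 1 n, (n : ℝ) / k * (stirling1 (n - 1) (k - 1) : ℝ) * (bernoulli k : ℝ) := by
  obtain ⟨m, rfl⟩ : ∃ m, n = m + 1 := ⟨n - 1, by omega⟩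
  have hm1 : m + 1 - 1 = m := rfl
  rw [hm1]
  set B : ℕ → ℝ := fun k => (bernoulli k : ℝ) with hB
  set b : ℕ → ℝ := fun j => (stirling1 (m + 1) j : ℝ) with hb
  set a : ℕ → ℝ := fun j => (stirling1 m j : ℝ) with ha
  -- Step 1: reindex the Icc sum
  have step1 : ∑ k ∈ Finset.Icc 1 (m + 1),
      ((m + 1 : ℕ) : ℝ) / k * (stirling1 m (k - 1) : ℝ) * (bernoulli k : ℝ)
      = ∑ i ∈ range (m + 1), ((m : ℝ) + 1) / (i + 1) * a i * B (i + 1) := by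
    rw [← Finset.Ico_add_one_right_eq_Icc, Finset.sum_Ico_eq_sum_range]
    refine Finset.sum_congr (by norm_num) fun i _ => ?_
    have h1 : 1 + i - 1 = i := by omega
    rw [h1]
    have h2 : ((1 + i : ℕ) : ℝ) = (i : ℝ) + 1 := by push_cast; ring
    rw [h2]
    push_cast
    simp only [ha, hB]
    ring
  -- Step 2: extend to range (m+2)
  have step2 : ∑ i ∈ range (m + 2), ((m : ℝ) + 1) / (i + 1) * a i * B (i + 1)
      = ∑ i ∈ range (m + 1), ((m : ℝ) + 1) / (i + 1) * a i * B (i + 1) := by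
    rw [Finset.sum_range_succ]
    have h0 : stirling1 m (m + 1) = 0 := stirling1_eq_zero_of_lt (by omega)
    have : a (m + 1) = 0 := by simp [ha, h0]
    rw [this]
    ring
  -- Step 3: termwise expansion via the key identity
  have step3 : ∀ i ∈ range (m + 2),
      ((m : ℝ) + 1) / (i + 1) * a i * B (i + 1)
      = (∑ j ∈ range (m + 2), b j / ((j : ℝ) + 1)
            * ((((j + 1).choose (i + 1) : ℕ) : ℝ) * B (i + 1)))
        - b i * (B (i + 1) / ((i : ℝ) + 1)) := by
    intro i _
    have hI := key_identity m i
    have hi : ((i : ℝ) + 1) ≠ 0 := by positivity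
    have hterm : ∀ j ∈ range (m + 2),
        b j / ((j : ℝ) + 1) * ((((j + 1).choose (i + 1) : ℕ) : ℝ) * B (i + 1))
        = b j * ((j.choose i : ℕ) : ℝ) * (B (i + 1) / ((i : ℝ) + 1)) := by
      intro j _
      have hj : ((j : ℝ) + 1) ≠ 0 := by positivity
      have hc : (((j + 1).choose (i + 1) : ℕ) : ℝ) * ((i : ℝ) + 1)
          = ((j : ℝ) + 1) * ((j.choose i : ℕ) : ℝ) := by
        exact_mod_cast (Nat.add_one_mul_choose_eq j i).symm
      field_simp
      linear_combination b j * B (i + 1) * hc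
    rw [Finset.sum_congr rfl hterm, ← Finset.sum_mul]
    rw [show (∑ j ∈ range (m + 2), b j * ((j.choose i : ℕ) : ℝ)) = 
        ((m : ℝ) + 1) * a i + b i from by rw [hb, ha]; push_cast [hI]; ring]
    field_simp
    ring
  rw [step1, ← step2, Finset.sum_congr rfl step3, Finset.sum_sub_distrib, Finset.sum_comm]
  -- Step 4: inner Bernoulli sums
  have step4 : ∀ j ∈ range (m + 2),
      ∑ i ∈ range (m + 2), b j / ((j : ℝ) + 1)
          * ((((j + 1).choose (i + 1) : ℕ) : ℝ) * B (i + 1))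
      = b j / ((j : ℝ) + 1) * ((if j = 0 then (1:ℝ) else 0) + B (j + 1) - 1) := by
    intro j hj
    rw [← Finset.mul_sum, inner_bernoulli_sum (m + 1) j (by simpa using Nat.lt_succ_iff.mp (mem_range.mp hj))]
  rw [Finset.sum_congr rfl step4, bernoulliStar_eq_sum]
  have h00 : stirling1 (m + 1) 0 = 0 := stirling1_zero_right (by omega)
  have hb0 : b 0 = 0 := by simp [hb, h00]
  rw [← Finset.sum_sub_distrib, ← Finset.sum_neg_distrib]
  refine Finset.sum_congr rfl fun j _ => ?_
  by_cases hj0 : j = 0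
  · subst hj0; simp [hb, h00]
  · simp only [hj0, if_false]
    rw [hb]
    ring
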